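/- Let K be a finite field with |K| = q, let W be a finite-dimensional K-vector space, and let (U,V) be a nontrivial solution of the isometry equation with tuples of length m = q+1 such that max_i dim_K V_i = max_i dim_K U_i = n > 1. Then: (a) U_i ≠ V_j for all i, j ∈ {1,…,m}; and (b) for all i, j ∈ {1,…,m}, V_i ⊆ V_j implies i = j. -/

import Mathlib

open Finset
open scoped Classical

/-- The pair of tuples `(U, V)` is a solution of the isometry equation
`∑ i, (1/|V i|) • 1_{V i} = ∑ i, (1/|U i|) • 1_{U i}` as real-valued functions on `W`. -/
def IsometrySolution {K W : Type*} [Field K] [AddCommGroup W] [Module K W]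
    {m : ℕ} (U V : Fin m → Submodule K W) : Prop :=
  ∀ w : W,
    ∑ i, ((Nat.card ↥(V i) : ℝ))⁻¹ * (if w ∈ V i then 1 else 0) =
    ∑ i, ((Nat.card ↥(U i) : ℝ))⁻¹ * (if w ∈ U i then 1 else 0)

/-- Two tuples of subspaces are equivalent if one is a permutation of the other. -/
def TuplesEquiv {K W : Type*} [Field K] [AddCommGroup W] [Module K W]
    {m : ℕ} (U V : Fin m → Submodule K W) : Prop :=
  ∃ π : Equiv.Perm (Fin m), ∀ i, V i = U (π i)

namespace IsoAux

variable {K W : Type*} [Field K] [Fintype K] [AddCommGroup W] [Module K W]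

/-- A nonzero finite-dimensional vector space over a finite field `K` is not covered by
`≤ |K|` proper subspaces. -/
lemma covering [FiniteDimensional K W] (M : Submodule K W) (hM : M ≠ ⊥)
    (s : Finset (Submodule K W)) (hcard : s.card ≤ Fintype.card K)
    (hlt : ∀ X ∈ s, X < M) (hcov : ∀ w ∈ M, ∃ X ∈ s, w ∈ X) : False := by
  have hfinW : Finite W := Module.finite_of_finite K
  cases nonempty_fintype W
  have hq2 : 2 ≤ Fintype.card K := Fintype.one_lt_card
  set q := Fintype.card K with hqdef
  have hcardP : ∀ P : Submodule K W, (Finset.univ.filter (· ∈ P)).card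
      = q ^ Module.finrank K ↥P := by
    intro P
    rw [← Fintype.card_subtype]
    exact Module.card_eq_pow_finrank
  set d := Module.finrank K ↥M with hd
  have hd1 : 1 ≤ d := by
    have : Nontrivial ↥M := Submodule.nontrivial_iff_ne_bot.mpr hM
    exact Module.finrank_pos
  set B := (Finset.univ.filter (· ∈ M)).erase 0 with hB
  have hBcard : B.card = q ^ d - 1 := by
    rw [hB, Finset.card_erase_of_mem (by simp [Submodule.zero_mem]), hcardP M]
  have hsub : B ⊆ s.biUnion (fun X => (Finset.univ.filter (· ∈ X)).erase 0) := by
    intro w hw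
    rw [hB, Finset.mem_erase, Finset.mem_filter] at hw
    obtain ⟨hw0, _, hwM⟩ := hw
    obtain ⟨X, hX, hwX⟩ := hcov w hwM
    exact Finset.mem_biUnion.mpr ⟨X, hX, Finset.mem_erase.mpr ⟨hw0, Finset.mem_filter.mpr ⟨Finset.mem_univ _, hwX⟩⟩⟩
  have hbound : ∀ X ∈ s, ((Finset.univ.filter (· ∈ X)).erase 0).card ≤ q ^ (d - 1) - 1 := by
    intro X hX
    have hfr : Module.finrank K ↥X < d := Submodule.finrank_lt_finrank_of_lt (hlt X hX)
    have h1 : ((Finset.univ.filter (· ∈ X)).erase 0).card = q ^ Module.finrank K ↥X - 1 := by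
      rw [Finset.card_erase_of_mem (by simp [Submodule.zero_mem]), hcardP X]
    rw [h1]
    have : q ^ Module.finrank K ↥X ≤ q ^ (d - 1) :=
      Nat.pow_le_pow_right (by omega) (by omega)
    omega
  have hle : B.card ≤ s.card * (q ^ (d - 1) - 1) := by
    calc B.card ≤ (s.biUnion (fun X => (Finset.univ.filter (· ∈ X)).erase 0)).card :=
          Finset.card_le_card hsub
      _ ≤ ∑ X ∈ s, ((Finset.univ.filter (· ∈ X)).erase 0).card := Finset.card_biUnion_le
      _ ≤ s.card * (q ^ (d - 1) - 1) := by
          rw [← smul_eq_mul]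
          exact Finset.sum_le_card_nsmul s _ _ hbound
  set a := q ^ (d - 1) with ha
  have ha1 : 1 ≤ a := Nat.one_le_pow _ _ (by omega)
  have hpow : q ^ d = a * q := by
    rw [ha, ← pow_succ]
    congr 1
    omega
  have hkey : q * (a - 1) + q * 1 = q * a := by
    rw [← Nat.mul_add]
    congr 1
    omega
  have hma : s.card * (a - 1) ≤ q * (a - 1) := Nat.mul_le_mul_right _ hcard
  have hcomm : a * q = q * a := Nat.mul_comm a q
  have haq : 1 ≤ a * q := Nat.one_le_iff_ne_zero.mpr (by positivity)
  omega

lemma exists_perm_of_fibers {α β : Type*} [Fintype α] (f g : α → β)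
    (h : ∀ b, Fintype.card {a // f a = b} = Fintype.card {a // g a = b}) :
    ∃ σ : Equiv.Perm α, ∀ a, f a = g (σ a) := by
  classical
  refine ⟨Equiv.ofFiberEquiv (f := f) (g := g) (fun b => Fintype.equivOfCardEq (h b)), fun a => ?_⟩
  exact (Equiv.ofFiberEquiv_map (fun b => Fintype.equivOfCardEq (h b)) a).symm

/-- Number of indices `i` with `T i = X`. -/
noncomputable def vc {m : ℕ} (T : Fin m → Submodule K W) (X : Submodule K W) : ℕ :=
  (Finset.univ.filter fun i => T i = X).card

/-- The support of the solution: subspaces where the two multiplicities differ. -/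
noncomputable def Supp {m : ℕ} (U V : Fin m → Submodule K W) : Finset (Submodule K W) :=
  ((Finset.univ.image V) ∪ (Finset.univ.image U)).filter fun X => vc V X ≠ vc U X

lemma Supp_comm {m : ℕ} (U V : Fin m → Submodule K W) : Supp V U = Supp U V := by
  unfold Supp
  rw [Finset.union_comm]
  ext X
  simp only [Finset.mem_filter]
  exact and_congr_right fun _ => ne_comm

lemma vc_pos {m : ℕ} (T : Fin m → Submodule K W) (X : Submodule K W) (i : Fin m)
    (hi : T i = X) : 0 < vc T X :=
  Finset.card_pos.mpr ⟨i, Finset.mem_filter.mpr ⟨Finset.mem_univ i, hi⟩⟩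

lemma exists_of_vc_pos {m : ℕ} (T : Fin m → Submodule K W) (X : Submodule K W)
    (h : 0 < vc T X) : ∃ i, T i = X := by
  obtain ⟨i, hi⟩ := Finset.card_pos.mp h
  exact ⟨i, (Finset.mem_filter.mp hi).2⟩

lemma mem_image_of_vc_pos {m : ℕ} (T : Fin m → Submodule K W) (X : Submodule K W)
    (h : 0 < vc T X) : X ∈ Finset.univ.image T := by
  obtain ⟨i, hi⟩ := exists_of_vc_pos T X h
  exact Finset.mem_image.mpr ⟨i, Finset.mem_univ i, hi⟩

lemma vc_total {m : ℕ} (T : Fin m → Submodule K W) :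
    ∑ X ∈ Finset.univ.image T, vc T X = m := by
  have h := Finset.card_eq_sum_card_fiberwise
    (f := T) (s := Finset.univ) (t := Finset.univ.image T)
    (fun i _ => Finset.mem_image_of_mem T (Finset.mem_univ i))
  rw [Finset.card_univ, Fintype.card_fin] at h
  simp only [vc]
  exact h.symm

lemma key_identity {m : ℕ} (U V : Fin m → Submodule K W) (hsol : IsometrySolution U V) (w : W) :
    ∑ X ∈ Supp U V, (((vc V X : ℝ) - (vc U X : ℝ)) *
      ((Nat.card ↥X : ℝ)⁻¹ * (if w ∈ X then 1 else 0))) = 0 := by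
  have hgen : ∀ (T : Fin m → Submodule K W),
      Finset.univ.image T ⊆ ((Finset.univ.image V) ∪ (Finset.univ.image U)) →
      ∑ X ∈ ((Finset.univ.image V) ∪ (Finset.univ.image U)),
        (vc T X : ℝ) * ((Nat.card ↥X : ℝ)⁻¹ * (if w ∈ X then 1 else 0)) =
      ∑ i, ((Nat.card ↥(T i) : ℝ))⁻¹ * (if w ∈ T i then 1 else 0) := by
    intro T hTsub
    have h1 : ∀ i : Fin m, ((Nat.card ↥(T i) : ℝ))⁻¹ * (if w ∈ T i then 1 else 0) =
        ∑ X ∈ ((Finset.univ.image V) ∪ (Finset.univ.image U)),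
          (if T i = X then (Nat.card ↥X : ℝ)⁻¹ * (if w ∈ X then 1 else 0) else 0) := by
      intro i
      rw [Finset.sum_ite_eq ((Finset.univ.image V) ∪ (Finset.univ.image U)) (T i)
        (fun X => (Nat.card ↥X : ℝ)⁻¹ * (if w ∈ X then 1 else 0))]
      rw [if_pos (hTsub (Finset.mem_image_of_mem T (Finset.mem_univ i)))]
    calc ∑ X ∈ ((Finset.univ.image V) ∪ (Finset.univ.image U)),
          (vc T X : ℝ) * ((Nat.card ↥X : ℝ)⁻¹ * (if w ∈ X then 1 else 0))
        = ∑ X ∈ ((Finset.univ.image V) ∪ (Finset.univ.image U)), ∑ i : Fin m,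
            (if T i = X then (Nat.card ↥X : ℝ)⁻¹ * (if w ∈ X then 1 else 0) else 0) := by
          refine Finset.sum_congr rfl fun X _ => ?_
          rw [← Finset.sum_filter, Finset.sum_const, vc, nsmul_eq_mul]
      _ = ∑ i : Fin m, ∑ X ∈ ((Finset.univ.image V) ∪ (Finset.univ.image U)),
            (if T i = X then (Nat.card ↥X : ℝ)⁻¹ * (if w ∈ X then 1 else 0) else 0) :=
          Finset.sum_comm
      _ = ∑ i, ((Nat.card ↥(T i) : ℝ))⁻¹ * (if w ∈ T i then 1 else 0) := by
          refine Finset.sum_congr rfl fun i _ => ?_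
          rw [← h1 i]
  have hVU : ∑ X ∈ ((Finset.univ.image V) ∪ (Finset.univ.image U)),
        (vc V X : ℝ) * ((Nat.card ↥X : ℝ)⁻¹ * (if w ∈ X then 1 else 0)) =
      ∑ X ∈ ((Finset.univ.image V) ∪ (Finset.univ.image U)),
        (vc U X : ℝ) * ((Nat.card ↥X : ℝ)⁻¹ * (if w ∈ X then 1 else 0)) := by
    rw [hgen V Finset.subset_union_left, hgen U Finset.subset_union_right]
    exact hsol w
  have hzero : ∑ X ∈ ((Finset.univ.image V) ∪ (Finset.univ.image U)),
      (((vc V X : ℝ) - (vc U X : ℝ)) * ((Nat.card ↥X : ℝ)⁻¹ * (if w ∈ X then 1 else 0))) = 0 := by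
    simp only [sub_mul]
    rw [Finset.sum_sub_distrib, hVU, sub_self]
  have hfilter : ∑ X ∈ (((Finset.univ.image V) ∪ (Finset.univ.image U)).filter
        fun X => vc V X ≠ vc U X),
      (((vc V X : ℝ) - (vc U X : ℝ)) * ((Nat.card ↥X : ℝ)⁻¹ * (if w ∈ X then 1 else 0))) =
      ∑ X ∈ ((Finset.univ.image V) ∪ (Finset.univ.image U)),
      (((vc V X : ℝ) - (vc U X : ℝ)) * ((Nat.card ↥X : ℝ)⁻¹ * (if w ∈ X then 1 else 0))) := by
    refine Finset.sum_filter_of_ne fun X _ hne0 heq => hne0 ?_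
    rw [show ((vc V X : ℝ) - (vc U X : ℝ)) = 0 by rw [heq, sub_self], zero_mul]
  exact hfilter.trans hzero

lemma main_lemma [FiniteDimensional K W] {m : ℕ} (hm : m = Fintype.card K + 1)
    (U V : Fin m → Submodule K W) (hsol : IsometrySolution U V)
    (M : Submodule K W) (hMS : M ∈ Supp U V)
    (hmax : ∀ Y ∈ Supp U V, ¬ M < Y) (hsign : vc U M < vc V M) :
    (∀ i j, U i ≠ V j) ∧ (∀ i j, U i ≤ U j → i = j) := by
  have hfinW : Finite W := Module.finite_of_finite K
  set q := Fintype.card K with hq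
  set S := Supp U V with hS
  set T := S.filter (fun X => vc V X < vc U X) with hT
  have hTS : T ⊆ S := Finset.filter_subset _ _
  have hinv_pos : ∀ X : Submodule K W, 0 < ((Nat.card ↥X : ℝ))⁻¹ := by
    intro X
    have h1 : 0 < Nat.card ↥X := Nat.card_pos
    have h2 : (0:ℝ) < (Nat.card ↥X : ℝ) := by exact_mod_cast h1
    positivity
  -- every point of M is covered by an element of T
  have hcover : ∀ w ∈ M, ∃ X ∈ T, w ∈ X := by
    intro w hw
    by_contra hno
    push_neg at hno
    have hkey := key_identity U V hsol w
    have hpos : 0 < ∑ X ∈ S, (((vc V X : ℝ) - (vc U X : ℝ)) *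
        ((Nat.card ↥X : ℝ)⁻¹ * (if w ∈ X then 1 else 0))) := by
      apply Finset.sum_pos'
      · intro X hX
        by_cases hwX : w ∈ X
        · have h1 : vc U X ≤ vc V X := by
            by_contra h2
            push_neg at h2
            exact hno X (Finset.mem_filter.mpr ⟨hX, h2⟩) hwX
          have h3 : (0:ℝ) ≤ (vc V X : ℝ) - (vc U X : ℝ) :=
            sub_nonneg.mpr (by exact_mod_cast h1)
          have h4 : (0:ℝ) ≤ (Nat.card ↥X : ℝ)⁻¹ * (if w ∈ X then 1 else 0) := by
            rw [if_pos hwX, mul_one]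
            exact le_of_lt (hinv_pos X)
          exact mul_nonneg h3 h4
        · rw [if_neg hwX, mul_zero, mul_zero]
      · refine ⟨M, hMS, ?_⟩
        have h5 : (0:ℝ) < (vc V M : ℝ) - (vc U M : ℝ) :=
          sub_pos.mpr (by exact_mod_cast hsign)
        rw [if_pos hw, mul_one]
        exact mul_pos h5 (hinv_pos M)
    exact hpos.ne' hkey
  -- M is nonzero
  have hMbot : M ≠ ⊥ := by
    intro hbot
    have hall : ∀ Y ∈ S, Y = ⊥ := by
      intro Y hY
      by_contra hne
      exact hmax Y hY (hbot ▸ bot_lt_iff_ne_bot.mpr hne)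
    have hkey := key_identity U V hsol 0
    have hsingle : ∀ Y ∈ Supp U V, Y ≠ M → (((vc V Y : ℝ) - (vc U Y : ℝ)) *
        ((Nat.card ↥Y : ℝ)⁻¹ * (if (0:W) ∈ Y then 1 else 0))) = 0 := by
      intro Y hY hne
      exact absurd ((hall Y hY).trans hbot.symm) hne
    rw [Finset.sum_eq_single_of_mem M hMS hsingle, if_pos M.zero_mem, mul_one] at hkey
    have h2 : vc V M ≠ vc U M := (Finset.mem_filter.mp hMS).2
    have h3 : ((vc V M : ℝ) - (vc U M : ℝ)) ≠ 0 := sub_ne_zero.mpr (by exact_mod_cast h2)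
    exact (mul_ne_zero h3 (ne_of_gt (hinv_pos M))) hkey
  -- intersections with members of T are proper
  have himg : ∀ X ∈ T, M ⊓ X < M := by
    intro X hX
    rcases lt_or_eq_of_le (inf_le_left : M ⊓ X ≤ M) with h | h
    · exact h
    · exfalso
      have hMX : M ≤ X := inf_eq_left.mp h
      have hne : M ≠ X := by
        intro he
        have h1 : vc V X < vc U X := (Finset.mem_filter.mp hX).2
        rw [← he] at h1
        omega
      exact hmax X (hTS hX) (hMX.lt_of_ne hne)
  have hcov_img : ∀ w ∈ M, ∃ Z ∈ T.image (fun X => M ⊓ X), w ∈ Z := by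
    intro w hw
    obtain ⟨X, hX, hwX⟩ := hcover w hw
    exact ⟨M ⊓ X, Finset.mem_image_of_mem _ hX, Submodule.mem_inf.mpr ⟨hw, hwX⟩⟩
  have himg_lt : ∀ Z ∈ T.image (fun X => M ⊓ X), Z < M := by
    intro Z hZ
    obtain ⟨X, hX, rfl⟩ := Finset.mem_image.mp hZ
    exact himg X hX
  have hq1 : q + 1 ≤ (T.image (fun X => M ⊓ X)).card := by
    by_contra h
    push_neg at h
    exact covering M hMbot _ (by omega) himg_lt hcov_img
  have hch1 : (T.image (fun X => M ⊓ X)).card ≤ T.card := Finset.card_image_le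
  have hch2 : T.card ≤ ∑ X ∈ T, vc U X := by
    rw [Finset.card_eq_sum_ones]
    refine Finset.sum_le_sum fun X hX => ?_
    have h1 : vc V X < vc U X := (Finset.mem_filter.mp hX).2
    omega
  have hTsubU : T ⊆ Finset.univ.image U := by
    intro X hX
    have h1 : vc V X < vc U X := (Finset.mem_filter.mp hX).2
    exact mem_image_of_vc_pos U X (by omega)
  have hch3 : ∑ X ∈ T, vc U X ≤ ∑ X ∈ Finset.univ.image U, vc U X :=
    Finset.sum_le_sum_of_subset hTsubU
  have htot : ∑ X ∈ Finset.univ.image U, vc U X = q + 1 := by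
    rw [vc_total U, hm]
  have hTcard : T.card = q + 1 := by omega
  have hsumT : ∑ X ∈ T, vc U X = q + 1 := by omega
  have hUT : Finset.univ.image U ⊆ T := by
    intro X hX
    by_contra hXT
    obtain ⟨i, _, hi⟩ := Finset.mem_image.mp hX
    have hpos : 0 < vc U X := vc_pos U X i hi
    have := Finset.sum_lt_sum_of_subset hTsubU hX hXT hpos (fun j _ _ => Nat.zero_le _)
    omega
  have hone : ∀ X ∈ T, vc U X = 1 := by
    by_contra h
    push_neg at h
    obtain ⟨X₀, hX₀, hne⟩ := h
    have h2 : 1 < vc U X₀ := by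
      have h3 : vc V X₀ < vc U X₀ := (Finset.mem_filter.mp hX₀).2
      omega
    have hlt : ∑ _X ∈ T, 1 < ∑ X ∈ T, vc U X :=
      Finset.sum_lt_sum (fun X hX => by
        have h3 : vc V X < vc U X := (Finset.mem_filter.mp hX).2
        omega) ⟨X₀, hX₀, h2⟩
    rw [Finset.sum_const, smul_eq_mul, mul_one] at hlt
    omega
  have hvzero : ∀ X ∈ T, vc V X = 0 := by
    intro X hX
    have h1 : vc V X < vc U X := (Finset.mem_filter.mp hX).2
    have h2 := hone X hX
    omega
  have ha : ∀ i j, U i ≠ V j := by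
    intro i j h
    have hUi : U i ∈ T := hUT (Finset.mem_image_of_mem U (Finset.mem_univ i))
    have h0 : vc V (U i) = 0 := hvzero _ hUi
    have h1 : 0 < vc V (U i) := vc_pos V (U i) j h.symm
    omega
  refine ⟨ha, fun i j hle => ?_⟩
  by_contra hij
  have hUi : U i ∈ T := hUT (Finset.mem_image_of_mem U (Finset.mem_univ i))
  have hUj : U j ∈ T := hUT (Finset.mem_image_of_mem U (Finset.mem_univ j))
  have hne : U i ≠ U j := by
    intro he
    have h1 : 1 < vc U (U i) := Finset.one_lt_card.mpr
      ⟨i, Finset.mem_filter.mpr ⟨Finset.mem_univ i, rfl⟩,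
       j, Finset.mem_filter.mpr ⟨Finset.mem_univ j, he.symm⟩, hij⟩
    have h2 := hone _ hUi
    omega
  apply covering M hMbot ((T.erase (U i)).image (fun X => M ⊓ X))
  · calc ((T.erase (U i)).image (fun X => M ⊓ X)).card ≤ (T.erase (U i)).card :=
        Finset.card_image_le
      _ = T.card - 1 := Finset.card_erase_of_mem hUi
      _ ≤ q := by omega
  · intro Z hZ
    obtain ⟨X, hX, rfl⟩ := Finset.mem_image.mp hZ
    exact himg X (Finset.erase_subset _ _ hX)
  · intro w hw
    obtain ⟨X, hX, hwX⟩ := hcover w hw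
    by_cases hXi : X = U i
    · refine ⟨M ⊓ U j, Finset.mem_image_of_mem _ (Finset.mem_erase.mpr ⟨hne.symm, hUj⟩), ?_⟩
      exact Submodule.mem_inf.mpr ⟨hw, hle (hXi ▸ hwX)⟩
    · exact ⟨M ⊓ X, Finset.mem_image_of_mem _ (Finset.mem_erase.mpr ⟨hXi, hX⟩),
        Submodule.mem_inf.mpr ⟨hw, hwX⟩⟩

end IsoAux

/-- In a nontrivial minimal solution with equal maximal dimensions `n > 1`:
(a) `U i ≠ V j` for all `i`, `j`, and (b) `V i ⊆ V j` implies `i = j`. -/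
theorem nontrivial_solution_ne_and_inclusion
    (K W : Type*) [Field K] [Fintype K] [AddCommGroup W] [Module K W]
    [FiniteDimensional K W]
    (U V : Fin (Fintype.card K + 1) → Submodule K W)
    (hsol : IsometrySolution U V) (hnontriv : ¬ TuplesEquiv U V)
    (n : ℕ) (hn : 1 < n)
    (hmaxV : (Finset.univ.sup fun i => Module.finrank K ↥(V i)) = n)
    (hmaxU : (Finset.univ.sup fun i => Module.finrank K ↥(U i)) = n) :
    (∀ i j, U i ≠ V j) ∧ (∀ i j, V i ≤ V j → i = j) := by
  classical
  open IsoAux in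
  have hsol' : IsometrySolution V U := fun w => (hsol w).symm
  have hm : Fintype.card K + 1 = Fintype.card K + 1 := rfl
  -- the support is nonempty
  have hSne : (Supp U V).Nonempty := by
    rw [Finset.nonempty_iff_ne_empty]
    intro hemp
    apply hnontriv
    have hcounts : ∀ X, vc V X = vc U X := by
      intro X
      by_contra hne
      have hX : X ∈ (Finset.univ.image V) ∪ (Finset.univ.image U) := by
        rcases Nat.eq_zero_or_pos (vc V X) with h | h
        · exact Finset.mem_union_right _ (mem_image_of_vc_pos U X (by omega))
        · exact Finset.mem_union_left _ (mem_image_of_vc_pos V X h)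
      have hmem : X ∈ Supp U V := Finset.mem_filter.mpr ⟨hX, hne⟩
      rw [hemp] at hmem
      exact absurd hmem (Finset.notMem_empty X)
    have h' : ∀ b, Fintype.card {a // V a = b} = Fintype.card {a // U a = b} := by
      intro b
      rw [Fintype.card_subtype, Fintype.card_subtype]
      exact hcounts b
    exact exists_perm_of_fibers V U h'
  obtain ⟨M₀, hM₀S, hM₀max⟩ : ∃ m ∈ Supp U V, ∀ x ∈ Supp U V, ¬ m < x := by
    obtain ⟨m, hm⟩ := Finset.exists_maximal hSne
    exact ⟨m, hm.1, fun x hx hlt => lt_irrefl _ (lt_of_lt_of_le hlt (hm.2 hx hlt.le))⟩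
  have hM₀ne : vc V M₀ ≠ vc U M₀ := (Finset.mem_filter.mp hM₀S).2
  -- helper to conclude from a maximal element on the V-heavy side... (swapped application)
  have hswap : ∀ M : Submodule K W, M ∈ Supp U V → (∀ Y ∈ Supp U V, ¬ M < Y) →
      vc V M < vc U M →
      (∀ i j, U i ≠ V j) ∧ (∀ i j, V i ≤ V j → i = j) := by
    intro M hMS hMmax hsgn
    have h := main_lemma rfl V U hsol' M (by rwa [Supp_comm])
      (fun Y hY => hMmax Y (by rwa [Supp_comm] at hY)) hsgn
    exact ⟨fun i j hij => h.1 j i hij.symm, h.2⟩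
  rcases Nat.lt_or_ge (vc V M₀) (vc U M₀) with h₀ | h₀
  · exact hswap M₀ hM₀S hM₀max h₀
  · have hsgn₀ : vc U M₀ < vc V M₀ := by omega
    obtain ⟨ha, -⟩ := main_lemma rfl U V hsol M₀ hM₀S hM₀max hsgn₀
    -- find an index where U attains maximal dimension n
    obtain ⟨i₀, -, hi₀⟩ := Finset.exists_mem_eq_sup Finset.univ Finset.univ_nonempty
      (fun i => Module.finrank K ↥(U i))
    have hfr : Module.finrank K ↥(U i₀) = n := by rw [← hi₀, hmaxU]
    have hUiS : U i₀ ∈ Supp U V := by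
      refine Finset.mem_filter.mpr ⟨Finset.mem_union_right _
        (Finset.mem_image_of_mem U (Finset.mem_univ i₀)), ?_⟩
      have hv0 : vc V (U i₀) = 0 := by
        simp only [vc]
        rw [Finset.card_eq_zero, Finset.filter_eq_empty_iff]
        exact fun j _ h => ha i₀ j h.symm
      have hu1 : 0 < vc U (U i₀) := vc_pos U (U i₀) i₀ rfl
      omega
    -- a maximal element of the support above U i₀
    have hS'ne : ((Supp U V).filter (fun Y => U i₀ ≤ Y)).Nonempty :=
      ⟨U i₀, Finset.mem_filter.mpr ⟨hUiS, le_refl _⟩⟩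
    obtain ⟨M₁, hM₁, hM₁max'⟩ : ∃ m ∈ (Supp U V).filter (fun Y => U i₀ ≤ Y),
        ∀ x ∈ (Supp U V).filter (fun Y => U i₀ ≤ Y), ¬ m < x := by
      obtain ⟨m, hm⟩ := Finset.exists_maximal hS'ne
      exact ⟨m, hm.1, fun x hx hlt => lt_irrefl _ (lt_of_lt_of_le hlt (hm.2 hx hlt.le))⟩
    have hM₁S : M₁ ∈ Supp U V := (Finset.mem_filter.mp hM₁).1
    have hle : U i₀ ≤ M₁ := (Finset.mem_filter.mp hM₁).2
    have hM₁max : ∀ Y ∈ Supp U V, ¬ M₁ < Y := by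
      intro Y hY hlt
      exact hM₁max' Y (Finset.mem_filter.mpr ⟨hY, hle.trans hlt.le⟩) hlt
    rcases Nat.lt_or_ge (vc V M₁) (vc U M₁) with h₁ | h₁
    · exact hswap M₁ hM₁S hM₁max h₁
    · exfalso
      have hne₁ : vc V M₁ ≠ vc U M₁ := (Finset.mem_filter.mp hM₁S).2
      have hvpos : 0 < vc V M₁ := by omega
      obtain ⟨j, hj⟩ := exists_of_vc_pos V M₁ hvpos
      have h1 : Module.finrank K ↥M₁ ≤ n := by
        rw [← hmaxV, ← hj]
        exact Finset.le_sup (f := fun i => Module.finrank K ↥(V i)) (Finset.mem_univ j)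
      have h2 : Module.finrank K ↥M₁ ≤ Module.finrank K ↥(U i₀) := by omega
      have heq : U i₀ = M₁ := Submodule.eq_of_le_of_finrank_le hle h2
      exact ha i₀ j (heq.trans hj.symm)
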